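/- Consider K = 2 tasks with computation cycles F₁, F₂ > 0 and slot durations Δt₂, Δt₃ > 0. Task 1 can be processed in slots 2 and 3 with frequencies f_{1,2}, f_{1,3} ≥ 0; task 2 only in slot 3 with frequency f_{2,3} ≥ 0. Completion requires f_{1,2}·Δt₂ + f_{1,3}·Δt₃ ≥ F₁ and f_{2,3}·Δt₃ ≥ F₂, and per-slot capacity requires f_{1,2} ≤ F_max and f_{1,3} + f_{2,3} ≤ F_max. A feasible assignment exists if and only if F_max ≥ max{(F₁+F₂)/(Δt₂+Δt₃), F₂/Δt₃}. -/

import Mathlib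

/-- Two-task feasibility: a feasible frequency assignment exists iff
F_max ≥ max{(F₁+F₂)/(Δt₂+Δt₃), F₂/Δt₃}. -/
theorem stmt_4 (F1 F2 Δt2 Δt3 Fmax : ℝ) (hF1 : 0 < F1) (hF2 : 0 < F2)
    (hΔt2 : 0 < Δt2) (hΔt3 : 0 < Δt3) :
    (∃ f12 f13 f23 : ℝ, 0 ≤ f12 ∧ 0 ≤ f13 ∧ 0 ≤ f23 ∧
        F1 ≤ f12 * Δt2 + f13 * Δt3 ∧ F2 ≤ f23 * Δt3 ∧
        f12 ≤ Fmax ∧ f13 + f23 ≤ Fmax) ↔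
      max ((F1 + F2) / (Δt2 + Δt3)) (F2 / Δt3) ≤ Fmax := by
  have hsum : 0 < Δt2 + Δt3 := by linarith
  constructor
  · rintro ⟨f12, f13, f23, h12, h13, h23, hc1, hc2, hb1, hb2⟩
    apply max_le
    · rw [div_le_iff₀ hsum]
      nlinarith
    · rw [div_le_iff₀ hΔt3]
      nlinarith
  · intro h
    have h1 : F1 + F2 ≤ Fmax * (Δt2 + Δt3) := by
      have := le_trans (le_max_left _ _) h
      rwa [div_le_iff₀ hsum] at this
    have h2 : F2 ≤ Fmax * Δt3 := by
      have := le_trans (le_max_right _ _) h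
      rwa [div_le_iff₀ hΔt3] at this
    have hFmax : 0 < Fmax := by nlinarith
    by_cases hcase : F1 ≤ Fmax * Δt2
    · refine ⟨F1 / Δt2, 0, F2 / Δt3, le_of_lt (div_pos hF1 hΔt2), le_refl 0,
        le_of_lt (div_pos hF2 hΔt3), ?_, ?_, ?_, ?_⟩
      · rw [div_mul_cancel₀ _ (ne_of_gt hΔt2)]; linarith
      · rw [div_mul_cancel₀ _ (ne_of_gt hΔt3)]
      · rw [div_le_iff₀ hΔt2]; linarith [mul_comm Fmax Δt2]
      · rw [zero_add, div_le_iff₀ hΔt3]; linarith [mul_comm Fmax Δt3]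
    · push_neg at hcase
      refine ⟨Fmax, (F1 - Fmax * Δt2) / Δt3, F2 / Δt3, le_of_lt hFmax,
        le_of_lt (div_pos (by linarith) hΔt3), le_of_lt (div_pos hF2 hΔt3),
        ?_, ?_, le_refl _, ?_⟩
      · rw [div_mul_cancel₀ _ (ne_of_gt hΔt3)]; linarith
      · rw [div_mul_cancel₀ _ (ne_of_gt hΔt3)]
      · rw [← add_div, div_le_iff₀ hΔt3]; nlinarith
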